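/- Let G be a finite simple 2-edge-connected graph and uv an edge with contribution |n_u − n_v| ≥ 2. Then Mo(G) ≥ 4. -/

import Mathlib

open SimpleGraph Finset

open scoped Classical in
/-- The number of vertices strictly closer to `u` than to `v`. -/
noncomputable def nCloser {V : Type*} [Fintype V] (G : SimpleGraph V) (u v : V) : ℕ :=
  (Finset.univ.filter (fun w => G.dist w u < G.dist w v)).card

/-- The contribution `|n_u - n_v|` of a pair of vertices. -/
noncomputable def contrib {V : Type*} [Fintype V] (G : SimpleGraph V) (u v : V) : ℕ :=
  ((nCloser G u v : ℤ) - (nCloser G v u : ℤ)).natAbs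

open scoped Classical in
/-- The Mostar index `Mo(G) = Σ_{uv ∈ E(G)} |n_u − n_v|`. -/
noncomputable def mostar {V : Type*} [Fintype V] (G : SimpleGraph V) : ℕ :=
  ∑ e ∈ G.edgeFinset, Sym2.lift
    ⟨fun u v => contrib G u v,
     fun a b => by simp only [contrib]; omega⟩ e

open scoped Classical

/-- The total transmission of a vertex, as an integer. -/
noncomputable def transT {V : Type*} [Fintype V] (G : SimpleGraph V) (x : V) : ℤ :=
  ∑ w, (G.dist w x : ℤ)

/-- The contribution function as a function on `Sym2 V`. -/
noncomputable def contribSym2 {V : Type*} [Fintype V] (G : SimpleGraph V) : Sym2 V → ℕ :=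
  Sym2.lift ⟨fun u v => contrib G u v, fun a b => by simp only [contrib]; omega⟩

lemma contribSym2_mk {V : Type*} [Fintype V] (G : SimpleGraph V) (a b : V) :
    contribSym2 G s(a, b) = contrib G a b := rfl

lemma mostar_eq {V : Type*} [Fintype V] (G : SimpleGraph V) :
    mostar G = ∑ e ∈ G.edgeFinset, contribSym2 G e := rfl

lemma contrib_eq_abs {V : Type*} [Fintype V] (G : SimpleGraph V) (hG : G.Connected)
    {a b : V} (hab : G.Adj a b) :
    (contrib G a b : ℤ) = |transT G a - transT G b| := by
  have hdist : ∀ w : V, G.dist w a ≤ G.dist w b + 1 ∧ G.dist w b ≤ G.dist w a + 1 := by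
    intro w
    have hba : G.dist b a ≤ 1 := by
      simpa using SimpleGraph.dist_le (SimpleGraph.Walk.cons hab.symm SimpleGraph.Walk.nil)
    have hab' : G.dist a b ≤ 1 := by
      simpa using SimpleGraph.dist_le (SimpleGraph.Walk.cons hab SimpleGraph.Walk.nil)
    have h1 : G.dist w a ≤ G.dist w b + G.dist b a := hG.dist_triangle
    have h2 : G.dist w b ≤ G.dist w a + G.dist a b := hG.dist_triangle
    omega
  have key : (nCloser G a b : ℤ) - (nCloser G b a : ℤ) = transT G b - transT G a := by
    unfold nCloser transT
    rw [Finset.card_filter, Finset.card_filter]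
    push_cast
    rw [← Finset.sum_sub_distrib, ← Finset.sum_sub_distrib]
    refine Finset.sum_congr rfl fun w _ => ?_
    have := hdist w
    split_ifs <;> push_cast <;> omega
  rw [contrib, Int.natCast_natAbs, key, abs_sub_comm]

lemma walk_sum_ge {V : Type*} [Fintype V] (G : SimpleGraph V) (hG : G.Connected) :
    ∀ {a b : V} (p : G.Walk a b),
      |transT G a - transT G b| ≤ (p.edges.map (fun e => (contribSym2 G e : ℤ))).sum := by
  intro a b p
  induction p with
  | nil => simp
  | @cons a c b h q ih =>
    rw [SimpleGraph.Walk.edges_cons, List.map_cons, List.sum_cons]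
    have h1 : |transT G a - transT G b| ≤ |transT G a - transT G c| + |transT G c - transT G b| :=
      abs_sub_le _ _ _
    have h2 : (contribSym2 G s(a, c) : ℤ) = |transT G a - transT G c| := by
      rw [contribSym2_mk]; exact contrib_eq_abs G hG h
    omega

theorem mostar_ge_four_of_contrib_ge_two {V : Type*} [Fintype V] (G : SimpleGraph V)
    (hG : G.Connected) (hbr : ∀ e, ¬ G.IsBridge e) (u v : V) (huv : G.Adj u v)
    (hc : 2 ≤ contrib G u v) : 4 ≤ mostar G := by
  classical
  have hnb := hbr s(u, v)
  rw [SimpleGraph.isBridge_iff] at hnb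
  push_neg at hnb
  have hreach : (G \ SimpleGraph.fromEdgeSet {s(u, v)}).Reachable u v := hnb
  obtain ⟨p0, hp0⟩ := SimpleGraph.reachable_delete_edges_iff_exists_walk.mp hreach
  set p : G.Walk u v := p0.toPath.1 with hp
  have hnodup : p.edges.Nodup := p0.toPath.2.isTrail.edges_nodup
  have hpsub : p.edges ⊆ p0.edges := SimpleGraph.Walk.edges_toPath_subset p0
  have hne : s(u, v) ∉ p.edges := fun h => hp0 (hpsub h)
  have hsubE : ∀ e ∈ p.edges, e ∈ G.edgeFinset := fun e he =>
    SimpleGraph.mem_edgeFinset.mpr (p.edges_subset_edgeSet he)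
  -- the sum along the path is at least 2
  have habs : (2 : ℤ) ≤ |transT G u - transT G v| := by
    rw [← contrib_eq_abs G hG huv]; exact_mod_cast hc
  have hpathsum : 2 ≤ ∑ e ∈ p.edges.toFinset, contribSym2 G e := by
    have hlist : ((∑ e ∈ p.edges.toFinset, contribSym2 G e : ℕ) : ℤ)
        = (p.edges.map (fun e => (contribSym2 G e : ℤ))).sum := by
      rw [List.sum_toFinset _ hnodup, Nat.cast_list_sum, List.map_map]
      rfl
    have h2 : (2 : ℤ) ≤ ((∑ e ∈ p.edges.toFinset, contribSym2 G e : ℕ) : ℤ) := by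
      rw [hlist]; exact le_trans habs (walk_sum_ge G hG p)
    exact_mod_cast h2
  -- assemble
  have hSsub : insert s(u, v) p.edges.toFinset ⊆ G.edgeFinset := by
    refine Finset.insert_subset (SimpleGraph.mem_edgeFinset.mpr huv) ?_
    intro e he
    exact hsubE e (List.mem_toFinset.mp he)
  have hnotmem : s(u, v) ∉ p.edges.toFinset := fun h => hne (List.mem_toFinset.mp h)
  have hsum : ∑ e ∈ insert s(u, v) p.edges.toFinset, contribSym2 G e ≤ mostar G := by
    rw [mostar_eq]
    exact Finset.sum_le_sum_of_subset hSsub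
  rw [Finset.sum_insert hnotmem, contribSym2_mk] at hsum
  omega
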